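/- For 1 ≤ s < t ≤ p and 1 ≤ u < v ≤ p, let A_{(s,t)(u,v)} denote the mixed second partial derivative ∂²/∂τ∂ρ, evaluated at (τ,ρ) = (0,0), of the matrix-valued map (τ,ρ) ↦ Γ · exp(τU_{st} + ρU_{uv}) · Λ · exp(τU_{st} + ρU_{uv})ᵗ · Γᵗ (matrix exponential). Then for every 1 ≤ a ≤ p: (1/(2λ_a²))·tr(A_{(s,t)(u,v)} · γ_a γ_aᵗ) = λ_a⁻²(λ_t − λ_a) if s = u = a and t = v; = λ_a⁻²(λ_s − λ_a) if s = u and t = v = a; and = 0 in all other cases. (This quantity is the m-connection embedding curvature H^m_{(s,t)(u,v)a} of the submanifold A(λ) of covariance matrices with fixed eigenvalues.) -/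

import Mathlib

open Matrix NormedSpace



noncomputable def cQuad {p : ℕ} (L W : Matrix (Fin p) (Fin p) ℝ) : Matrix (Fin p) (Fin p) ℝ :=
  W * W * L + (W * L * Wᵀ + W * L * Wᵀ) + L * (Wᵀ * Wᵀ)

section big
attribute [local instance] Matrix.normedAddCommGroup Matrix.normedSpace

noncomputable def linG (p : ℕ) : NormedAddCommGroup (Matrix (Fin p) (Fin p) ℝ) :=
  Matrix.linftyOpNormedAddCommGroup
noncomputable def linS (p : ℕ) : @NormedSpace ℝ (Matrix (Fin p) (Fin p) ℝ) _
    (linG p).toSeminormedAddCommGroup := Matrix.linftyOpNormedSpace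

theorem hasDerivAt_transfer {p : ℕ} (g : ℝ → Matrix (Fin p) (Fin p) ℝ)
    (g' : Matrix (Fin p) (Fin p) ℝ) (y : ℝ) :
    (HasDerivAt g g' y) ↔ (letI := linG p; letI := linS p; HasDerivAt g g' y) := by
  exact Iff.rfl

theorem deriv_transfer {p : ℕ} (f : ℝ → Matrix (Fin p) (Fin p) ℝ) (x : ℝ) :
    deriv f x = (letI := linG p; letI := linS p; deriv f x) := by
  by_cases h : (letI := linG p; letI := linS p; DifferentiableAt ℝ f x)
  · have h1 := @DifferentiableAt.hasDerivAt ℝ _ _ (linG p) (linS p) f x h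
    have h2 := (hasDerivAt_transfer f _ x).mpr h1
    exact h2.deriv.trans (@HasDerivAt.deriv ℝ _ _ (linG p) (linS p) _ _ _ h1).symm
  · have h' : ¬ DifferentiableAt ℝ f x := by
      intro hc
      exact h (@HasDerivAt.differentiableAt ℝ _ _ (linG p) (linS p) _ _ _
        ((hasDerivAt_transfer f _ x).mp hc.hasDerivAt))
    exact (deriv_zero_of_not_differentiableAt h').trans
      (@deriv_zero_of_not_differentiableAt ℝ _ _ (linG p) (linS p) _ _ h).symm

end big


@[reducible] noncomputable def linT (p : ℕ) : TopologicalSpace (Matrix (Fin p) (Fin p) ℝ) :=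
  (Matrix.linftyOpNormedRing).toUniformSpace.toTopologicalSpace
@[reducible] noncomputable def linU (p : ℕ) : UniformSpace (Matrix (Fin p) (Fin p) ℝ) :=
  (Matrix.linftyOpNormedRing).toUniformSpace

section core
attribute [local instance] Matrix.linftyOpNormedRing Matrix.linftyOpNormedAlgebra
attribute [local instance] linT linU

variable {p : ℕ}

theorem core_mixed (Γ L X Y : Matrix (Fin p) (Fin p) ℝ) :
    (letI := linG p; letI := linS p; deriv (fun τ : ℝ => deriv (fun ρ : ℝ =>
        Γ * exp (τ • X + ρ • Y) * L * exp (τ • Xᵀ + ρ • Yᵀ) * Γᵀ) 0) 0)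
      = (4:ℝ)⁻¹ • (Γ * (cQuad L (X + Y) - cQuad L (X - Y)) * Γᵀ) := by
  set G : ℝ × ℝ → Matrix (Fin p) (Fin p) ℝ := fun q =>
    Γ * exp (q.1 • X + q.2 • Y) * L * exp (q.1 • Xᵀ + q.2 • Yᵀ) * Γᵀ with hGdef
  -- analyticity
  have hXY : ∀ q : ℝ × ℝ, AnalyticAt ℝ G q := by
    intro q
    have l1 : AnalyticAt ℝ (fun q : ℝ × ℝ => q.1 • X + q.2 • Y) q :=
      (analyticAt_fst.smul analyticAt_const).add (analyticAt_snd.smul analyticAt_const)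
    have l2 : AnalyticAt ℝ (fun q : ℝ × ℝ => q.1 • Xᵀ + q.2 • Yᵀ) q :=
      (analyticAt_fst.smul analyticAt_const).add (analyticAt_snd.smul analyticAt_const)
    have e1 : AnalyticAt ℝ (fun q : ℝ × ℝ => exp (q.1 • X + q.2 • Y)) q :=
      (exp_analytic _).comp l1
    have e2 : AnalyticAt ℝ (fun q : ℝ × ℝ => exp (q.1 • Xᵀ + q.2 • Yᵀ)) q :=
      (exp_analytic _).comp l2
    exact (((analyticAt_const.mul e1).mul analyticAt_const).mul e2).mul analyticAt_const
  have hGdiff : ∀ q, DifferentiableAt ℝ G q := fun q => (hXY q).differentiableAt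
  set Φ : ℝ × ℝ → (ℝ × ℝ) →L[ℝ] Matrix (Fin p) (Fin p) ℝ := fderiv ℝ G with hΦdef
  have hΦa : ∀ q, AnalyticAt ℝ Φ q := fun q => (hXY q).fderiv
  set D2 := fderiv ℝ Φ (0, 0) with hD2def
  have hΦd : HasFDerivAt Φ D2 (0, 0) := (hΦa _).differentiableAt.hasFDerivAt
  have hsymm : ∀ v w, D2 v w = D2 w v := fun v w =>
    second_derivative_symmetric (fun y => (hGdiff y).hasFDerivAt) hΦd v w
  -- inner derivative
  have hinner : ∀ τ : ℝ, HasDerivAt (fun ρ => G (τ, ρ)) (Φ (τ, 0) (0, 1)) 0 := by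
    intro τ
    have h1 : HasDerivAt (fun ρ : ℝ => ((τ, ρ) : ℝ × ℝ)) ((0 : ℝ), (1 : ℝ)) 0 :=
      (hasDerivAt_const _ _).prodMk (hasDerivAt_id _)
    exact (hGdiff (τ, 0)).hasFDerivAt.comp_hasDerivAt 0 h1
  have hiform : (fun τ : ℝ => deriv (fun ρ => G (τ, ρ)) 0) = fun τ => Φ (τ, 0) (0, 1) :=
    funext fun τ => (hinner τ).deriv
  -- outer derivative
  have houter : HasDerivAt (fun τ : ℝ => Φ (τ, 0) (0, 1)) (D2 (1, 0) (0, 1)) 0 := by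
    have h1 : HasDerivAt (fun τ : ℝ => ((τ, 0) : ℝ × ℝ)) ((1 : ℝ), (0 : ℝ)) 0 :=
      (hasDerivAt_id _).prodMk (hasDerivAt_const _ _)
    have hc : HasDerivAt (fun τ : ℝ => Φ (τ, 0)) (D2 (1, 0)) 0 :=
      hΦd.comp_hasDerivAt_of_eq (E := (ℝ × ℝ) →L[ℝ] Matrix (Fin p) (Fin p) ℝ) 0 h1 rfl
    have h2 := hc.clm_apply (hasDerivAt_const 0 ((0:ℝ), (1:ℝ)))
    simpa using h2
  -- directional second derivative
  have hQ : ∀ w : ℝ × ℝ, D2 w w = Γ * cQuad L (w.1 • X + w.2 • Y) * Γᵀ := by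
    intro w
    set W : Matrix (Fin p) (Fin p) ℝ := w.1 • X + w.2 • Y with hWdef
    have hWt : Wᵀ = w.1 • Xᵀ + w.2 • Yᵀ := by
      rw [hWdef, transpose_add, transpose_smul, transpose_smul]
    have hGr : (fun r : ℝ => G (r • w)) =
        fun r => Γ * exp (r • W) * L * exp (r • Wᵀ) * Γᵀ := by
      funext r
      simp only [hGdef, Prod.smul_fst, Prod.smul_snd, smul_eq_mul, hWt, hWdef, smul_add,
        mul_smul, transpose_add, transpose_smul]
    have hexp1 : ∀ r : ℝ, HasDerivAt (fun u : ℝ => exp (u • W)) (W * exp (r • W)) r :=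
      fun r => hasDerivAt_exp_smul_const' W r
    have hexp2 : ∀ r : ℝ, HasDerivAt (fun u : ℝ => exp (u • Wᵀ)) (Wᵀ * exp (r • Wᵀ)) r :=
      fun r => hasDerivAt_exp_smul_const' Wᵀ r
    have hφ' : ∀ r : ℝ, HasDerivAt (fun u : ℝ => Γ * exp (u • W) * L * exp (u • Wᵀ) * Γᵀ)
        ((Γ * (W * exp (r • W)) * L * exp (r • Wᵀ) +
          Γ * exp (r • W) * L * (Wᵀ * exp (r • Wᵀ))) * Γᵀ) r := by
      intro r
      exact ((((hexp1 r).const_mul Γ).mul_const L).mul (hexp2 r)).mul_const Γᵀ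
    have hline : ∀ r : ℝ, HasDerivAt (fun r : ℝ => r • w) w r := by
      intro r; simpa using (hasDerivAt_id r).smul_const w
    have hdir1 : ∀ r : ℝ, HasDerivAt (fun r : ℝ => G (r • w)) (Φ (r • w) w) r := by
      intro r
      exact (hGdiff (r • w)).hasFDerivAt.comp_hasDerivAt r (hline r)
    have hψΦ : ∀ r : ℝ, Φ (r • w) w =
        (Γ * (W * exp (r • W)) * L * exp (r • Wᵀ) +
          Γ * exp (r • W) * L * (Wᵀ * exp (r • Wᵀ))) * Γᵀ := by
      intro r
      have hd := hdir1 r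
      rw [hGr] at hd
      exact hd.unique (hφ' r)
    -- second derivative, chain side
    have hmain2 : HasDerivAt (fun r : ℝ => Φ (r • w) w) (D2 w w) 0 := by
      have hc : HasDerivAt (fun r : ℝ => Φ (r • w)) (D2 w) 0 :=
        hΦd.comp_hasDerivAt_of_eq (E := (ℝ × ℝ) →L[ℝ] Matrix (Fin p) (Fin p) ℝ) 0 (hline 0)
          (by simp)
      have h2 := hc.clm_apply (hasDerivAt_const 0 w)
      simpa using h2
    -- second derivative, explicit side
    have termA : HasDerivAt (fun r : ℝ => Γ * (W * exp (r • W)) * L * exp (r • Wᵀ))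
        (Γ * (W * (W * exp ((0:ℝ) • W))) * L * exp ((0:ℝ) • Wᵀ) +
          Γ * (W * exp ((0:ℝ) • W)) * L * (Wᵀ * exp ((0:ℝ) • Wᵀ))) 0 :=
      ((((hexp1 0).const_mul W).const_mul Γ).mul_const L).mul (hexp2 0)
    have termB : HasDerivAt (fun r : ℝ => Γ * exp (r • W) * L * (Wᵀ * exp (r • Wᵀ)))
        (Γ * (W * exp ((0:ℝ) • W)) * L * (Wᵀ * exp ((0:ℝ) • Wᵀ)) +
          Γ * exp ((0:ℝ) • W) * L * (Wᵀ * (Wᵀ * exp ((0:ℝ) • Wᵀ)))) 0 :=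
      (((hexp1 0).const_mul Γ).mul_const L).mul ((hexp2 0).const_mul Wᵀ)
    have hψ' := (termA.add termB).mul_const Γᵀ
    have hu : D2 w w =
        (Γ * (W * (W * exp ((0:ℝ) • W))) * L * exp ((0:ℝ) • Wᵀ) +
          Γ * (W * exp ((0:ℝ) • W)) * L * (Wᵀ * exp ((0:ℝ) • Wᵀ)) +
          (Γ * (W * exp ((0:ℝ) • W)) * L * (Wᵀ * exp ((0:ℝ) • Wᵀ)) +
            Γ * exp ((0:ℝ) • W) * L * (Wᵀ * (Wᵀ * exp ((0:ℝ) • Wᵀ))))) * Γᵀ := by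
      have hm2 : HasDerivAt (fun r : ℝ =>
          (Γ * (W * exp (r • W)) * L * exp (r • Wᵀ) +
            Γ * exp (r • W) * L * (Wᵀ * exp (r • Wᵀ))) * Γᵀ) (D2 w w) 0 := by
        have := hmain2
        simp only [hψΦ] at this
        exact this
      exact hm2.unique hψ'
    have e0 : exp ((0:ℝ) • W) = 1 := by rw [zero_smul, exp_zero]
    have e0t : exp ((0:ℝ) • Wᵀ) = 1 := by rw [zero_smul, exp_zero]
    rw [hu, e0, e0t]
    simp only [mul_one, one_mul]
    rw [cQuad]
    noncomm_ring
  -- polarization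
  have hpol : D2 (1, 0) (0, 1) = (4:ℝ)⁻¹ • (D2 (1, 1) (1, 1) - D2 (1, -1) (1, -1)) := by
    have h1 : ((1, 1) : ℝ × ℝ) = (1, 0) + (0, 1) := by norm_num
    have h2 : ((1, -1) : ℝ × ℝ) = (1, 0) - (0, 1) := by norm_num [Prod.ext_iff]
    rw [h1, h2]
    simp only [map_add, map_sub, ContinuousLinearMap.add_apply, ContinuousLinearMap.sub_apply]
    rw [hsymm (0, 1) (1, 0)]
    module
  -- assemble
  show deriv (fun τ : ℝ => deriv (fun ρ => G (τ, ρ)) 0) 0 = _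
  rw [hiform, houter.deriv, hpol, hQ, hQ]
  have c1 : (((1:ℝ), (1:ℝ)) : ℝ × ℝ).1 • X + (((1:ℝ), (1:ℝ)) : ℝ × ℝ).2 • Y = X + Y := by
    simp
  have c2 : (((1:ℝ), (-1:ℝ)) : ℝ × ℝ).1 • X + (((1:ℝ), (-1:ℝ)) : ℝ × ℝ).2 • Y = X - Y := by
    simp [sub_eq_add_neg]
  rw [c1, c2]
  congr 1
  rw [mul_sub, sub_mul]
end core


section big2
attribute [local instance] Matrix.normedAddCommGroup Matrix.normedSpace

theorem bigLemma {p : ℕ} (Γ L X Y : Matrix (Fin p) (Fin p) ℝ) :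
    deriv (fun τ : ℝ => deriv (fun ρ : ℝ =>
        Γ * exp (τ • X + ρ • Y) * L * (exp (τ • X + ρ • Y))ᵀ * Γᵀ) 0) 0
      = (4:ℝ)⁻¹ • (Γ * (cQuad L (X + Y) - cQuad L (X - Y)) * Γᵀ) := by
  have h1 : ∀ τ ρ : ℝ, Γ * exp (τ • X + ρ • Y) * L * (exp (τ • X + ρ • Y))ᵀ * Γᵀ
      = Γ * exp (τ • X + ρ • Y) * L * exp (τ • Xᵀ + ρ • Yᵀ) * Γᵀ := by
    intro τ ρ
    rw [← Matrix.exp_transpose, transpose_add, transpose_smul, transpose_smul]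
  simp only [h1]
  have h2 : (fun τ : ℝ => deriv (fun ρ : ℝ =>
        Γ * exp (τ • X + ρ • Y) * L * exp (τ • Xᵀ + ρ • Yᵀ) * Γᵀ) 0)
      = (fun τ : ℝ => (letI := linG p; letI := linS p; deriv (fun ρ : ℝ =>
        Γ * exp (τ • X + ρ • Y) * L * exp (τ • Xᵀ + ρ • Yᵀ) * Γᵀ) 0)) :=
    funext fun τ => deriv_transfer _ _
  rw [h2, deriv_transfer]
  exact core_mixed Γ L X Y

end big2

attribute [local instance] Matrix.normedAddCommGroup Matrix.normedSpace

set_option maxHeartbeats 1000000 in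
theorem lemT1 {p : ℕ} (s t u v a : Fin p) (hst : s < t) (huv : u < v) :
    ∑ k, ((Matrix.single s t (1:ℝ) - Matrix.single t s 1 :
        Matrix (Fin p) (Fin p) ℝ) a k *
      (Matrix.single u v (1:ℝ) - Matrix.single v u 1 :
        Matrix (Fin p) (Fin p) ℝ) k a +
      (Matrix.single u v (1:ℝ) - Matrix.single v u 1 :
        Matrix (Fin p) (Fin p) ℝ) a k *
      (Matrix.single s t (1:ℝ) - Matrix.single t s 1 :
        Matrix (Fin p) (Fin p) ℝ) k a)
      = (if s = u ∧ u = a ∧ t = v then (-2:ℝ) else 0) +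
        (if s = u ∧ t = v ∧ v = a then (-2:ℝ) else 0) := by
  simp only [Matrix.sub_apply, Matrix.single, Matrix.of_apply, sub_mul, mul_sub,
    ite_mul, mul_ite, one_mul, mul_one, zero_mul, mul_zero, ite_and]
  simp only [Finset.sum_sub_distrib, Finset.sum_add_distrib, Finset.sum_ite_eq, Finset.sum_ite_eq',
    Finset.mem_univ, if_true]
  split_ifs <;> subst_vars <;>
    (try simp only [Finset.sum_ite_eq, Finset.sum_ite_eq', Finset.mem_univ, if_true,
        Finset.sum_const_zero, sub_zero, zero_sub, neg_zero]) <;>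
    (try split_ifs) <;> subst_vars <;>
    first
      | (norm_num ; done)
      | (exact absurd hst (lt_irrefl _))
      | (exact absurd huv (lt_irrefl _))
      | (simp only [Fin.ext_iff, Fin.lt_def, eq_self_iff_true, not_true] at * <;> omega)

set_option maxHeartbeats 1000000 in
theorem lemT2 {p : ℕ} (lam : Fin p → ℝ) (s t u v a : Fin p) (hst : s < t) (huv : u < v) :
    ∑ k, lam k * ((Matrix.single s t (1:ℝ) - Matrix.single t s 1 :
        Matrix (Fin p) (Fin p) ℝ) a k *
      (Matrix.single u v (1:ℝ) - Matrix.single v u 1 :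
        Matrix (Fin p) (Fin p) ℝ) a k)
      = (if s = u ∧ u = a ∧ t = v then lam t else 0) +
        (if s = u ∧ t = v ∧ v = a then lam s else 0) := by
  simp only [Matrix.sub_apply, Matrix.single, Matrix.of_apply, sub_mul, mul_sub,
    ite_mul, mul_ite, one_mul, mul_one, zero_mul, mul_zero, ite_and]
  simp only [Finset.sum_sub_distrib, Finset.sum_add_distrib, Finset.sum_ite_eq, Finset.sum_ite_eq',
    Finset.mem_univ, if_true]
  split_ifs <;> subst_vars <;>
    (try simp only [Finset.sum_ite_eq, Finset.sum_ite_eq', Finset.mem_univ, if_true,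
        Finset.sum_const_zero, sub_zero, zero_sub, neg_zero]) <;>
    (try split_ifs) <;> subst_vars <;>
    first
      | (norm_num ; done)
      | (exact absurd hst (lt_irrefl _))
      | (exact absurd huv (lt_irrefl _))
      | (simp only [Fin.ext_iff, Fin.lt_def, eq_self_iff_true, not_true] at * <;> omega)

theorem cQuad_apply_diag {p : ℕ} (lam : Fin p → ℝ) (W : Matrix (Fin p) (Fin p) ℝ) (a : Fin p) :
    cQuad (Matrix.diagonal lam) W a a
      = 2 * lam a * (∑ k, W a k * W k a) + 2 * ∑ k, lam k * (W a k * W a k) := by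
  have t1 : (W * W * Matrix.diagonal lam) a a = (∑ k, W a k * W k a) * lam a := by
    rw [Matrix.mul_diagonal, Matrix.mul_apply]
  have t2 : (W * Matrix.diagonal lam * Wᵀ) a a = ∑ k, W a k * lam k * W a k := by
    rw [Matrix.mul_apply]
    simp only [Matrix.mul_diagonal, Matrix.transpose_apply]
  have t3 : (Matrix.diagonal lam * (Wᵀ * Wᵀ)) a a = lam a * ∑ k, W k a * W a k := by
    rw [Matrix.diagonal_mul, Matrix.mul_apply]
    simp only [Matrix.transpose_apply]
  have hh : ∑ k, W k a * W a k = ∑ k, W a k * W k a :=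
    Finset.sum_congr rfl fun k _ => mul_comm _ _
  have hg : ∑ k, W a k * lam k * W a k = ∑ k, lam k * (W a k * W a k) :=
    Finset.sum_congr rfl fun k _ => by ring
  simp only [cQuad, Matrix.add_apply]
  rw [t1, t2, t3, hh, hg]
  ring

theorem embedding_curvature_fixed_eigenvalue_submanifold
    (p : ℕ) (hp : 2 ≤ p)
    (Γ : Matrix (Fin p) (Fin p) ℝ) (hΓ : Γ ∈ Matrix.orthogonalGroup (Fin p) ℝ)
    (lam : Fin p → ℝ) (hlam : StrictAnti lam) (hpos : ∀ i, 0 < lam i)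
    (Λ : Matrix (Fin p) (Fin p) ℝ) (hΛ : Λ = Matrix.diagonal lam)
    (U : Fin p → Fin p → Matrix (Fin p) (Fin p) ℝ)
    (hU : ∀ s t, U s t = Matrix.single s t 1 - Matrix.single t s 1)
    (s t u v a : Fin p) (hst : s < t) (huv : u < v)
    (A : Matrix (Fin p) (Fin p) ℝ)
    (hA : A = deriv (fun τ : ℝ => deriv (fun ρ : ℝ =>
          Γ * NormedSpace.exp (τ • U s t + ρ • U u v) * Λ *
            (NormedSpace.exp (τ • U s t + ρ • U u v))ᵀ * Γᵀ) 0) 0) :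
    (1 / (2 * (lam a) ^ 2)) *
        Matrix.trace (A * Matrix.vecMulVec (fun i => Γ i a) (fun i => Γ i a)) =
      if s = u ∧ u = a ∧ t = v then ((lam a) ^ 2)⁻¹ * (lam t - lam a)
      else if s = u ∧ t = v ∧ v = a then ((lam a) ^ 2)⁻¹ * (lam s - lam a)
      else 0 := by
  subst hΛ
  have hΓ1 : Γᵀ * Γ = 1 := by
    rw [Matrix.mem_orthogonalGroup_iff'] at hΓ
    rw [← Matrix.conjTranspose_eq_transpose_of_trivial]
    exact hΓ
  set X := U s t with hX
  set Y := U u v with hY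
  have hAval : A = (4:ℝ)⁻¹ • (Γ * (cQuad (Matrix.diagonal lam) (X + Y) -
      cQuad (Matrix.diagonal lam) (X - Y)) * Γᵀ) := by
    rw [hA]; exact bigLemma Γ (Matrix.diagonal lam) X Y
  have hvec : Matrix.vecMulVec (fun i => Γ i a) (fun i => Γ i a)
      = Γ * Matrix.single a a 1 * Γᵀ := by
    ext i j
    simp [Matrix.vecMulVec_apply, Matrix.mul_apply, Matrix.single, Matrix.of_apply,
      ite_and, Finset.sum_ite_eq, Finset.sum_ite_eq', mul_comm]
  set D := cQuad (Matrix.diagonal lam) (X + Y) - cQuad (Matrix.diagonal lam) (X - Y) with hD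
  have hkey : Γ * D * Γᵀ * (Γ * Matrix.single a a 1 * Γᵀ)
      = Γ * (D * Matrix.single a a 1) * Γᵀ := by
    have h1 : Γᵀ * (Γ * (Matrix.single a a 1 * Γᵀ))
        = Matrix.single a a 1 * Γᵀ := by
      rw [← Matrix.mul_assoc, hΓ1, one_mul]
    simp only [Matrix.mul_assoc, h1]
  have htr : Matrix.trace (Γ * (D * Matrix.single a a 1) * Γᵀ) = D a a := by
    rw [Matrix.trace_mul_cycle, hΓ1, one_mul]
    simp [Matrix.trace, Matrix.diag, Matrix.mul_apply, Matrix.single, Matrix.of_apply,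
      ite_and, Finset.sum_ite_eq, Finset.sum_ite_eq']
  have hT1 : ∑ k, (X a k * Y k a + Y a k * X k a)
      = (if s = u ∧ u = a ∧ t = v then (-2:ℝ) else 0) +
        (if s = u ∧ t = v ∧ v = a then (-2:ℝ) else 0) := by
    rw [hX, hY, hU, hU]
    exact lemT1 s t u v a hst huv
  have hT2 : ∑ k, lam k * (X a k * Y a k)
      = (if s = u ∧ u = a ∧ t = v then lam t else 0) +
        (if s = u ∧ t = v ∧ v = a then lam s else 0) := by
    rw [hX, hY, hU, hU]
    exact lemT2 lam s t u v a hst huv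
  have hE1 : (∑ k, (X + Y) a k * (X + Y) k a) - (∑ k, (X - Y) a k * (X - Y) k a)
      = 2 * ∑ k, (X a k * Y k a + Y a k * X k a) := by
    rw [← Finset.sum_sub_distrib, Finset.mul_sum]
    exact Finset.sum_congr rfl fun k _ => by
      simp only [Matrix.add_apply, Matrix.sub_apply]; ring
  have hE2 : (∑ k, lam k * ((X + Y) a k * (X + Y) a k))
      - (∑ k, lam k * ((X - Y) a k * (X - Y) a k))
      = 4 * ∑ k, lam k * (X a k * Y a k) := by
    rw [← Finset.sum_sub_distrib, Finset.mul_sum]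
    exact Finset.sum_congr rfl fun k _ => by
      simp only [Matrix.add_apply, Matrix.sub_apply]; ring
  have hDaa : D a a = 2 * lam a * (2 * ∑ k, (X a k * Y k a + Y a k * X k a))
      + 2 * (4 * ∑ k, lam k * (X a k * Y a k)) := by
    rw [hD, Matrix.sub_apply, cQuad_apply_diag, cQuad_apply_diag, ← hE1, ← hE2]
    ring
  rw [hAval, hvec, smul_mul_assoc, Matrix.trace_smul, hkey, htr, smul_eq_mul, hDaa, hT1, hT2]
  have ha : lam a ≠ 0 := ne_of_gt (hpos a)
  by_cases h1 : s = u ∧ u = a ∧ t = v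
  · by_cases h2 : s = u ∧ t = v ∧ v = a
    · exfalso
      obtain ⟨-, h1b, -⟩ := h1
      obtain ⟨-, -, h2c⟩ := h2
      rw [h1b, h2c] at huv
      exact absurd huv (lt_irrefl _)
    · simp only [if_pos h1, if_neg h2]
      field_simp
      ring
  · simp only [if_neg h1]
    by_cases h2 : s = u ∧ t = v ∧ v = a
    · simp only [if_pos h2]
      field_simp
      ring
    · simp only [if_neg h2]
      ring
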